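/- Let Λ be a free ℤ-module of finite rank and let e₀, u₁, u₂ be elements that form part of a ℤ-basis of Λ. Let z ∈ ℂ with z ∉ ℝ, and set σ = √2 · e₀ + z · u₁ + u₂ ∈ Λ ⊗ ℂ. Then the minimal primitive submodule M of Λ with σ ∈ M ⊗ ℂ equals ℤe₀ ⊕ ℤu₁ ⊕ ℤu₂. -/

import Mathlib

open TensorProduct

lemma aux_complex (z : ℂ) (hz : z.im ≠ 0) (p q r : ℤ)
    (h : (Real.sqrt 2 : ℂ) * p + z * q + r = 0) : p = 0 ∧ q = 0 ∧ r = 0 := by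
  have him := congrArg Complex.im h
  simp [Complex.add_im, Complex.mul_im] at him
  have hq : q = 0 := by
    rcases him with h' | h'
    · exact absurd h' hz
    · exact h'
  subst hq
  have hre := congrArg Complex.re h
  simp [Complex.add_re, Complex.mul_re] at hre
  have hp : p = 0 := by
    by_contra hp
    refine irrational_sqrt_two ⟨(-r) / p, ?_⟩
    have hp' : (p : ℝ) ≠ 0 := Int.cast_ne_zero.mpr hp
    push_cast
    field_simp
    linarith
  subst hp
  refine ⟨rfl, rfl, ?_⟩
  exact_mod_cast by simpa using hre

theorem minimal_primitive_submodule_eq_span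
    (Λ : Type*) [AddCommGroup Λ] [Module ℤ Λ]
    {ι : Type*} [Fintype ι] (b : Module.Basis ι ℤ Λ)
    (i0 i1 i2 : ι) (h01 : i0 ≠ i1) (h02 : i0 ≠ i2) (h12 : i1 ≠ i2)
    (z : ℂ) (hz : z.im ≠ 0) :
    sInf {M : Submodule ℤ Λ | NoZeroSMulDivisors ℤ (Λ ⧸ M) ∧
        ((Real.sqrt 2 : ℂ) ⊗ₜ[ℤ] b i0 + z ⊗ₜ[ℤ] b i1 + (1 : ℂ) ⊗ₜ[ℤ] b i2)
          ∈ M.baseChange ℂ} =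
      Submodule.span ℤ ({b i0, b i1, b i2} : Set Λ) := by
  set S := Submodule.span ℤ ({b i0, b i1, b i2} : Set Λ) with hSdef
  have hset : ({b i0, b i1, b i2} : Set Λ) = b '' {i0, i1, i2} := by
    simp [Set.image_insert_eq]
  apply le_antisymm
  · apply sInf_le
    constructor
    · constructor
      intro c x h
      rcases eq_or_ne c 0 with rfl | hc
      · exact Or.inl rfl
      right
      obtain ⟨y, rfl⟩ := Submodule.Quotient.mk_surjective S x
      have h3 := map_zsmul S.mkQ c y
      rw [Submodule.mkQ_apply, Submodule.mkQ_apply, h] at h3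
      rw [Submodule.Quotient.mk_eq_zero] at h3
      rw [← Int.cast_smul_eq_zsmul ℤ c y, Int.cast_id] at h3
      rw [Submodule.Quotient.mk_eq_zero]
      rw [hSdef, hset, Module.Basis.mem_span_image] at h3 ⊢
      rwa [LinearEquiv.map_smul, Finsupp.support_smul_eq hc] at h3
    · refine Submodule.add_mem _ (Submodule.add_mem _ ?_ ?_) ?_ <;>
        exact Submodule.tmul_mem_baseChange_of_mem _
          (Submodule.subset_span (by simp))
  · apply le_sInf
    rintro M ⟨hM1, hM2⟩
    haveI : Module.Finite ℤ Λ := Module.Finite.of_basis b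
    letI qmod : Module ℤ (Λ ⧸ M) := Submodule.Quotient.module M
    haveI hfin : Module.Finite ℤ (Λ ⧸ M) := Module.Finite.of_surjective M.mkQ M.mkQ_surjective
    haveI hnz : @NoZeroSMulDivisors ℤ (Λ ⧸ M) _ _ SMulZeroClass.toSMul := by
      refine @NoZeroSMulDivisors.mk ℤ (Λ ⧸ M) _ _ SMulZeroClass.toSMul (fun {c x} h => ?_)
      refine hM1.eq_zero_or_eq_zero_of_smul_eq_zero
        (?_ : @HSMul.hSMul ℤ (Λ ⧸ M) (Λ ⧸ M)
          (@instHSMul ℤ _ (ZSMul.toSMul : SMul ℤ (Λ ⧸ M))) c x = 0)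
      rw [← @Int.cast_smul_eq_zsmul ℤ (Λ ⧸ M) _ _ qmod c x, Int.cast_id]
      exact h
    haveI hfree : Module.Free ℤ (Λ ⧸ M) := Module.free_of_finite_type_torsion_free'
    let c := Module.Free.chooseBasis ℤ (Λ ⧸ M)
    let f := LinearMap.baseChange ℂ M.mkQ
    have hf : f ((Real.sqrt 2 : ℂ) ⊗ₜ[ℤ] b i0 + z ⊗ₜ[ℤ] b i1 + (1 : ℂ) ⊗ₜ[ℤ] b i2) = 0 := by
      have hle : M.baseChange ℂ ≤ LinearMap.ker f := by
        rw [Submodule.baseChange_eq_span, Submodule.span_le]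
        intro t ht
        simp only [Submodule.map_coe, Set.mem_image, SetLike.mem_coe] at ht
        obtain ⟨m, hm, rfl⟩ := ht
        simp only [SetLike.mem_coe, LinearMap.mem_ker, TensorProduct.mk_apply, f,
          LinearMap.baseChange_tmul, Submodule.mkQ_apply,
          (Submodule.Quotient.mk_eq_zero M).mpr hm, TensorProduct.tmul_zero]
      exact hle hM2
    have key : (Real.sqrt 2 : ℂ) ⊗ₜ[ℤ] (M.mkQ (b i0)) + z ⊗ₜ[ℤ] (M.mkQ (b i1))
        + (1 : ℂ) ⊗ₜ[ℤ] (M.mkQ (b i2)) = 0 := by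
      simpa [f, LinearMap.baseChange_tmul] using hf
    have hzero : ∀ j, c.repr (M.mkQ (b i0)) j = 0 ∧ c.repr (M.mkQ (b i1)) j = 0 ∧
        c.repr (M.mkQ (b i2)) j = 0 := by
      intro j
      have hrep := congrArg (fun t => (c.baseChange ℂ).repr t j) key
      simp only [map_add, Finsupp.add_apply, Module.Basis.baseChange_repr_tmul, map_zero,
        Finsupp.coe_zero, Pi.zero_apply] at hrep
      have h' : (Real.sqrt 2 : ℂ) * (c.repr (M.mkQ (b i0)) j : ℤ) +
          z * (c.repr (M.mkQ (b i1)) j : ℤ) + (c.repr (M.mkQ (b i2)) j : ℤ) = 0 := by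
        rw [← hrep]
        rw [← @Int.cast_smul_eq_zsmul ℂ ℂ _ _ _ (c.repr (M.mkQ (b i0)) j) (Real.sqrt 2 : ℂ),
          ← @Int.cast_smul_eq_zsmul ℂ ℂ _ _ _ (c.repr (M.mkQ (b i1)) j) z,
          ← @Int.cast_smul_eq_zsmul ℂ ℂ _ _ _ (c.repr (M.mkQ (b i2)) j) (1 : ℂ)]
        simp [smul_eq_mul]
        ring
      exact aux_complex z hz _ _ _ h'
    have hm : ∀ i, i = i0 ∨ i = i1 ∨ i = i2 → b i ∈ M := by
      rintro i (rfl | rfl | rfl) <;>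
      · rw [← Submodule.Quotient.mk_eq_zero M, ← Submodule.mkQ_apply]
        apply (LinearEquiv.map_eq_zero_iff c.repr).mp
        ext j
        first
        | exact (hzero j).1
        | exact (hzero j).2.1
        | exact (hzero j).2.2
    rw [hSdef, Submodule.span_le]
    rintro x (rfl | rfl | rfl)
    · exact hm i0 (Or.inl rfl)
    · exact hm i1 (Or.inr (Or.inl rfl))
    · exact hm i2 (Or.inr (Or.inr rfl))
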